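/- For all real numbers k ≥ 1 and α, β > 0, if (1+α)^k ≤ 1 + β·k, then k ≤ (e/(e-1)) · ((1+α)/α) · ln(2β(1+α)/α). -/

import Mathlib

lemma log_le_div_e {x : ℝ} (hx : 0 < x) : Real.log x ≤ x / Real.exp 1 := by
  have h1 : Real.log (x / Real.exp 1) ≤ x / Real.exp 1 - 1 :=
    Real.log_le_sub_one_of_pos (by positivity)
  rw [Real.log_div hx.ne' (Real.exp_pos 1).ne', Real.log_exp] at h1
  linarith

theorem stmt_0 (k α β : ℝ) (hk : 1 ≤ k) (hα : 0 < α) (hβ : 0 < β)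
    (h : (1 + α) ^ k ≤ 1 + β * k) :
    k ≤ (Real.exp 1 / (Real.exp 1 - 1)) * ((1 + α) / α) * Real.log (2 * β * (1 + α) / α) := by
  have hk0 : (0:ℝ) < k := lt_of_lt_of_le one_pos hk
  have h1α : (0:ℝ) < 1 + α := by linarith
  set c : ℝ := α / (1 + α) with hc
  have hc0 : 0 < c := by positivity
  have hcα : c ≤ α := by
    rw [hc, div_le_iff₀ h1α]; nlinarith
  have hE : (1:ℝ) < Real.exp 1 := by
    have := Real.exp_one_gt_d9; linarith
  have hE0 : (0:ℝ) < Real.exp 1 := Real.exp_pos 1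
  set L : ℝ := Real.log (2 * β * (1 + α) / α) with hLdef
  have hbern : 1 + k * α ≤ (1 + α) ^ k :=
    one_add_mul_self_le_rpow_one_add (by linarith) hk
  have hβα : α ≤ β := by nlinarith
  have hlog1 : c ≤ Real.log (1 + α) := by
    have h1 : Real.log (1 / (1 + α)) ≤ 1 / (1 + α) - 1 :=
      Real.log_le_sub_one_of_pos (by positivity)
    rw [Real.log_div one_ne_zero h1α.ne', Real.log_one] at h1
    have h2 : 1 / (1 + α) - 1 = -c := by rw [hc]; field_simp; ring
    rw [h2] at h1; linarith
  have hek : Real.exp (c * k) ≤ 1 + β * k := by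
    calc Real.exp (c * k) ≤ Real.exp (Real.log (1 + α) * k) := by
          apply Real.exp_le_exp.mpr; nlinarith
      _ = (1 + α) ^ k := (Real.rpow_def_of_pos h1α k).symm
      _ ≤ 1 + β * k := h
  have hLeq : 2 * β * (1 + α) / α = 2 * β / c := by
    rw [hc]; field_simp
  have hL2 : Real.log 2 ≤ L := by
    rw [hLdef]
    apply Real.log_le_log two_pos
    rw [hLeq, le_div_iff₀ hc0]
    nlinarith
  have hL0 : 0 ≤ L := le_trans (Real.log_nonneg one_le_two) hL2
  have hCge1 : (1:ℝ) ≤ Real.exp 1 / (Real.exp 1 - 1) := by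
    rw [le_div_iff₀ (by linarith)]; linarith
  have h1αα : (1 + α) / α = 1 / c := by rw [hc]; field_simp
  rw [h1αα]
  rcases le_or_gt 1 (β * k) with h2 | h2
  · -- main case: exp(ck) ≤ 2βk
    have hek2 : Real.exp (c * k) ≤ 2 * β * k := by nlinarith
    have hck : c * k ≤ Real.log (2 * β * k) := by
      rw [← Real.log_exp (c * k)]
      exact Real.log_le_log (Real.exp_pos _) hek2
    have hsplit : Real.log (2 * β * k) = Real.log (2 * β / c) + Real.log (c * k) := by
      rw [← Real.log_mul (by positivity) (by positivity)]
      congr 1; field_simp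
    have hlk : Real.log (c * k) ≤ c * k / Real.exp 1 := log_le_div_e (by positivity)
    have hLK : L = Real.log (2 * β / c) := by rw [hLdef, hLeq]
    have key : c * k * (Real.exp 1 - 1) ≤ Real.exp 1 * L := by
      have h3 : c * k ≤ L + c * k / Real.exp 1 := by
        rw [hLK]; rw [hsplit] at hck; linarith
      have h4 : c * k / Real.exp 1 * Real.exp 1 = c * k := by field_simp
      nlinarith [mul_le_mul_of_nonneg_right h3 hE0.le]
    have hpos : (0:ℝ) < (Real.exp 1 - 1) * c := by
      apply mul_pos (by linarith) hc0
    calc k = c * k * (Real.exp 1 - 1) / ((Real.exp 1 - 1) * c) := by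
          rw [eq_div_iff hpos.ne']; ring
      _ ≤ Real.exp 1 * L / ((Real.exp 1 - 1) * c) := by gcongr
      _ = Real.exp 1 / (Real.exp 1 - 1) * (1 / c) * L := by field_simp
  · -- small case: exp(ck) ≤ 2
    have hck : c * k ≤ Real.log 2 := by
      rw [← Real.log_exp (c * k)]
      exact Real.log_le_log (Real.exp_pos _) (by linarith)
    calc k ≤ Real.log 2 / c := by rw [le_div_iff₀ hc0]; linarith
      _ ≤ (Real.exp 1 / (Real.exp 1 - 1) * L) / c := by
          gcongr; nlinarith
      _ = Real.exp 1 / (Real.exp 1 - 1) * (1 / c) * L := by ring
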